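/- For every even nonzero integer p and every nonnegative integer n, T_n(L_p / 2) = L_{pn} / 2, where T_n is the Chebyshev polynomial of the first kind and L_m denotes the m-th Lucas number. -/

import Mathlib

open Finset

/-- Fibonacci numbers extended to all integers: `F_{-n} = (-1)^{n-1} F_n`. -/
def fibZ (n : ℤ) : ℤ :=
  if 0 ≤ n then Nat.fib n.toNat else (-1) ^ (n.natAbs + 1) * Nat.fib n.natAbs

/-- Lucas numbers extended to all integers: `L_n = F_{n-1} + F_{n+1}`. -/
def lucasZ (n : ℤ) : ℤ := fibZ (n - 1) + fibZ (n + 1)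

open Real

open goldenRatio in
lemma fibZ_binet (n : ℤ) : (fibZ n : ℝ) = (goldenRatio ^ n - goldenConj ^ n) / Real.sqrt 5 := by
  rcases le_or_gt 0 n with h | h
  · rw [fibZ, if_pos h]
    obtain ⟨m, rfl⟩ := Int.eq_ofNat_of_zero_le h
    rw [Int.toNat_natCast, zpow_natCast, zpow_natCast]
    exact_mod_cast Real.coe_fib_eq m
  · rw [fibZ, if_neg (not_le.2 h)]
    obtain ⟨m, rfl⟩ : ∃ m : ℕ, n = -(m : ℤ) := ⟨n.natAbs, by omega⟩
    have h1 : goldenRatio ^ (-(m : ℤ)) = (-1 : ℝ) ^ m * goldenConj ^ m := by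
      rw [zpow_neg, zpow_natCast, ← inv_pow, inv_goldenRatio, neg_pow]
    have h2 : goldenConj ^ (-(m : ℤ)) = (-1 : ℝ) ^ m * goldenRatio ^ m := by
      rw [zpow_neg, zpow_natCast, ← inv_pow, inv_goldenConj, neg_pow]
    rw [h1, h2, Int.natAbs_neg, Int.natAbs_natCast]
    push_cast
    rw [Real.coe_fib_eq m]
    ring

lemma lucasZ_binet (n : ℤ) : (lucasZ n : ℝ) = goldenRatio ^ n + goldenConj ^ n := by
  have h5 : Real.sqrt 5 ≠ 0 := by positivity
  have hφ : goldenRatio ≠ 0 := goldenRatio_ne_zero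
  have hψ : goldenConj ≠ 0 := goldenConj_ne_zero
  rw [lucasZ]
  push_cast
  rw [fibZ_binet, fibZ_binet]
  rw [zpow_sub_one₀ hφ, zpow_sub_one₀ hψ, zpow_add_one₀ hφ, zpow_add_one₀ hψ,
    inv_goldenRatio, inv_goldenConj]
  field_simp
  have h : Real.sqrt 5 = goldenRatio - goldenConj := (goldenRatio_sub_goldenConj).symm
  rw [h]; ring

lemma lucas_rec (p m : ℤ) (hp : Even p) :
    (lucasZ (m + 2 * p) : ℝ) = lucasZ p * lucasZ (m + p) - lucasZ m := by
  have hφ : goldenRatio ≠ 0 := goldenRatio_ne_zero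
  have hψ : goldenConj ≠ 0 := goldenConj_ne_zero
  have key : goldenRatio ^ p * goldenConj ^ p = 1 := by
    rw [← mul_zpow, goldenRatio_mul_goldenConj]
    obtain ⟨k, rfl⟩ := hp
    rw [zpow_add₀ (by norm_num : (-1 : ℝ) ≠ 0), ← mul_zpow]
    norm_num
  rw [lucasZ_binet, lucasZ_binet, lucasZ_binet, lucasZ_binet,
    show m + 2 * p = m + p + p by ring,
    zpow_add₀ hφ, zpow_add₀ hψ, zpow_add₀ hφ, zpow_add₀ hψ]
  linear_combination (-(goldenRatio ^ m + goldenConj ^ m)) * key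

theorem stmt_5 (p : ℤ) (hp : Even p) (hp0 : p ≠ 0) (n : ℕ) :
    (Polynomial.Chebyshev.T ℝ n).eval ((lucasZ p : ℝ) / 2) =
    (lucasZ (p * n) : ℝ) / 2 := by
  induction n using Nat.twoStepInduction with
  | zero =>
    simp [lucasZ, fibZ]
  | one =>
    simp [Polynomial.Chebyshev.T_one]
  | more n ih1 ih2 =>
    have hc : ((n + 2 : ℕ) : ℤ) = (n : ℤ) + 2 := by push_cast; ring
    rw [hc, Polynomial.Chebyshev.T_add_two]
    have h1 : ((n + 1 : ℕ) : ℤ) = (n : ℤ) + 1 := by push_cast; ring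
    rw [h1] at ih2
    have hrec := lucas_rec p (p * n) hp
    rw [show p * n + 2 * p = p * ((n : ℤ) + 2) by ring,
        show p * n + p = p * ((n : ℤ) + 1) by ring] at hrec
    simp only [Polynomial.eval_sub, Polynomial.eval_mul, Polynomial.eval_ofNat,
      Polynomial.eval_X]
    rw [ih1, ih2, hrec]
    ring
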